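/- Let A be an associative unital ℚ-algebra and let e, f, h ∈ A satisfy the sl₂ commutation relations h*e − e*h = 2·e, h*f − f*h = −2·f, e*f − f*e = h. Then for all natural numbers r, s: (e^r/r!) · (f^s/s!) = ∑_{k=0}^{min(r,s)} (f^{s−k}/(s−k)!) · binom(h − s − r + 2k, k) · (e^{r−k}/(r−k)!), where binom(h − s − r + 2k, k) = (k!)^{−1} · ∏_{m=0}^{k−1} (h − (s + r − 2k + m)·1). -/

import Mathlib

set_option linter.unusedSectionVars false
set_option maxHeartbeats 1000000

section
variable {A : Type*} [Ring A] [Algebra ℚ A]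

def sl2P (h : A) (a : ℤ) (k : ℕ) : A :=
  ((List.range k).map (fun m : ℕ => h - ((a + m : ℤ) : A))).prod

lemma sl2P_succ (h : A) (a : ℤ) (k : ℕ) :
    sl2P h a (k+1) = sl2P h a k * (h - ((a + k : ℤ) : A)) := by
  simp [sl2P, List.prod_range_succ]

lemma sl2P_succ' (h : A) (a : ℤ) (k : ℕ) :
    sl2P h a (k+1) = (h - (a : A)) * sl2P h (a+1) k := by
  rw [sl2P, List.prod_range_succ' (fun m : ℕ => h - ((a + m : ℤ) : A)) k]
  simp only [Nat.cast_zero, add_zero, sl2P]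
  congr 1
  congr 1
  apply List.map_congr_left
  intro m _
  congr 2
  push_cast
  ring

lemma sl2P_congr (h : A) {a b : ℤ} (hab : a = b) (k : ℕ) : sl2P h a k = sl2P h b k := by
  rw [hab]

lemma intCast_eq_smul_one (c : ℤ) : ((c : ℤ) : A) = (c : ℚ) • (1 : A) := by
  rw [Algebra.smul_def, mul_one]
  exact (map_intCast (algebraMap ℚ A) c).symm

variable {e f h : A}

lemma mul_hc (x : A) (c : ℤ) : x * (h - (c : A)) = x * h - (c : ℚ) • x := by
  rw [mul_sub, intCast_eq_smul_one, mul_smul_comm, mul_one]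

lemma hc_mul (x : A) (c : ℤ) : (h - (c : A)) * x = h * x - (c : ℚ) • x := by
  rw [sub_mul, intCast_eq_smul_one, smul_mul_assoc, one_mul]

lemma h_comm_sl2P (h : A) (a : ℤ) (k : ℕ) : h * sl2P h a k = sl2P h a k * h := by
  induction k with
  | zero => simp [sl2P]
  | succ k ih =>
    rw [sl2P_succ, ← mul_assoc, ih, mul_assoc, mul_assoc]
    congr 1
    rw [mul_sub, sub_mul]
    congr 1
    exact (Int.cast_comm _ _).symm

lemma hc_comm_sl2P (h : A) (a c : ℤ) (k : ℕ) :
    (h - (c : A)) * sl2P h a k = sl2P h a k * (h - (c : A)) := by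
  rw [sub_mul, mul_sub, h_comm_sl2P]
  congr 1
  exact Int.cast_comm c (sl2P h a k)

lemma e_hc (rel1 : h * e - e * h = 2 * e) (c : ℤ) :
    e * (h - (c : A)) = (h - ((c + 2 : ℤ) : A)) * e := by
  have h2e : (2 : A) * e = (2 : ℚ) • e := by
    rw [two_smul, two_mul]
  have h1 : e * h = h * e - (2 : ℚ) • e := by
    rw [← h2e, ← rel1]; noncomm_ring
  rw [mul_hc, hc_mul, h1]
  push_cast
  module

lemma e_sl2P (rel1 : h * e - e * h = 2 * e) (a : ℤ) (k : ℕ) :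
    e * sl2P h a k = sl2P h (a + 2) k * e := by
  induction k with
  | zero => simp [sl2P]
  | succ k ih =>
    rw [sl2P_succ, ← mul_assoc, ih, mul_assoc, e_hc rel1, ← mul_assoc, sl2P_succ]
    congr 3
    ring

lemma e_fpow (rel2 : h * f - f * h = -2 * f) (rel3 : e * f - f * e = h) :
    ∀ j : ℕ, e * f ^ (j+1) = f ^ (j+1) * e + ((j+1 : ℕ) : ℚ) • (f ^ j * (h - ((j : ℤ) : A))) := by
  intro j
  have h3 : e * f = f * e + h := by rw [← rel3]; noncomm_ring
  induction j with
  | zero => simpa using h3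
  | succ j ih =>
    have e2 : (-2 : A) * f = -((2:ℚ) • f) := by rw [neg_mul, two_smul, two_mul]
    have h2 : h * f = f * h - (2:ℚ) • f := by
      rw [sub_eq_add_neg, ← e2, ← rel2]; noncomm_ring
    have hf : (h - ((j:ℤ) : A)) * f = f * (h - ((j + 2 : ℤ) : A)) := by
      rw [hc_mul, mul_hc, h2]
      push_cast
      module
    have step : e * f ^ (j+2) = (e * f ^ (j+1)) * f := by
      rw [mul_assoc, ← pow_succ]
    have hfp : f ^ j * (f * (h - ((j + 2 : ℤ) : A))) = f ^ (j+1) * (h - ((j + 2 : ℤ) : A)) := by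
      rw [← mul_assoc, ← pow_succ]
    rw [step, ih, add_mul, smul_mul_assoc, mul_assoc, mul_assoc, hf, hfp, h3,
      mul_add (f ^ (j+1)) (f * e) h, ← mul_assoc, ← pow_succ, mul_hc, mul_hc]
    push_cast
    module

lemma e_fpow' (rel2 : h * f - f * h = -2 * f) (rel3 : e * f - f * e = h) (j : ℕ) :
    e * f ^ j = f ^ j * e + ((j : ℕ) : ℚ) • (f ^ (j-1) * (h - (((j:ℤ) - 1 : ℤ) : A))) := by
  cases j with
  | zero => simp
  | succ j =>
    have h1 : ((j+1:ℕ):ℤ) - 1 = ((j:ℕ):ℤ) := by push_cast; ring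
    rw [e_fpow rel2 rel3 j, h1]
    norm_num

lemma e_mul_fPe (rel1 : h * e - e * h = 2 * e) (rel2 : h * f - f * h = -2 * f)
    (rel3 : e * f - f * e = h) (j k l : ℕ) (a : ℤ) :
    e * (f ^ j * sl2P h a k * e ^ l)
      = f ^ j * sl2P h (a+2) k * e ^ (l+1)
        + ((j : ℕ) : ℚ) • (f ^ (j-1) * ((h - (((j:ℤ) - 1 : ℤ) : A)) * sl2P h a k) * e ^ l) := by
  have h4 : e * (sl2P h a k * e ^ l) = sl2P h (a+2) k * e ^ (l+1) := by
    rw [← mul_assoc, e_sl2P rel1, mul_assoc, ← pow_succ']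
  calc e * (f ^ j * sl2P h a k * e ^ l)
      = (e * f ^ j) * (sl2P h a k * e ^ l) := by noncomm_ring
    _ = (f ^ j * e + ((j : ℕ) : ℚ) • (f ^ (j-1) * (h - (((j:ℤ) - 1 : ℤ) : A))))
          * (sl2P h a k * e ^ l) := by rw [e_fpow' rel2 rel3]
    _ = f ^ j * (e * (sl2P h a k * e ^ l))
          + ((j : ℕ) : ℚ) • ((f ^ (j-1) * (h - (((j:ℤ) - 1 : ℤ) : A))) * (sl2P h a k * e ^ l)) := by
        rw [add_mul, smul_mul_assoc, mul_assoc]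
    _ = f ^ j * sl2P h (a+2) k * e ^ (l+1)
        + ((j : ℕ) : ℚ) • (f ^ (j-1) * ((h - (((j:ℤ) - 1 : ℤ) : A)) * sl2P h a k) * e ^ l) := by
        rw [h4, ← mul_assoc]
        congr 1
        congr 1
        noncomm_ring

def Tm (e f h : A) (r s k : ℕ) : A :=
  (((s-k).factorial * k.factorial * (r-k).factorial : ℕ) : ℚ)⁻¹ •
    (f ^ (s-k) * sl2P h ((s:ℤ)+(r:ℤ)-2*(k:ℤ)) k * e ^ (r-k))

def TmA (e f h : A) (r s k : ℕ) : A :=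
  (((s-k).factorial * k.factorial * (r-k).factorial : ℕ) : ℚ)⁻¹ •
    (f ^ (s-k) * sl2P h ((s:ℤ)+(r:ℤ)-2*(k:ℤ)+2) k * e ^ (r-k+1))

def TmB (e f h : A) (r s k : ℕ) : A :=
  ((((s-k).factorial * k.factorial * (r-k).factorial : ℕ) : ℚ)⁻¹ * (((s-k : ℕ) : ℕ) : ℚ)) •
    (f ^ (s-k-1) * ((h - ((((s-k:ℕ):ℤ) - 1 : ℤ) : A)) * sl2P h ((s:ℤ)+(r:ℤ)-2*(k:ℤ)) k) * e ^ (r-k))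

lemma e_Tm (rel1 : h * e - e * h = 2 * e) (rel2 : h * f - f * h = -2 * f)
    (rel3 : e * f - f * e = h) (r s k : ℕ) :
    e * Tm e f h r s k = TmA e f h r s k + TmB e f h r s k := by
  unfold Tm TmA TmB
  rw [mul_smul_comm, e_mul_fPe rel1 rel2 rel3 (s-k) k (r-k) ((s:ℤ)+(r:ℤ)-2*(k:ℤ)),
    smul_add, smul_smul]

lemma sl2P_zero (h : A) (a : ℤ) : sl2P h a 0 = 1 := by simp [sl2P]

lemma hIden (h : A) (k' : ℕ) (r s : ℤ) :
    ((r:ℚ)+1-((k':ℚ)+1)) • sl2P h (s+r+1-2*((k':ℤ)+1)+1) (k'+1)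
      + ((k':ℚ)+1) • ((h - ((s - ((k':ℤ)+1) : ℤ) : A)) * sl2P h (s+r+1-2*((k':ℤ)+1)+1) k')
    = ((r:ℚ)+1) • sl2P h (s+r+1-2*((k':ℤ)+1)) (k'+1) := by
  rw [sl2P_succ h _ k', sl2P_succ' h _ k']
  rw [hc_comm_sl2P, hc_comm_sl2P]
  have harg : (s+r+1-2*((k':ℤ)+1))+1 = s+r+1-2*((k':ℤ)+1)+1 := by ring
  rw [harg]
  rw [mul_hc, mul_hc, mul_hc]
  push_cast
  module

lemma hIden' (h : A) (r s k' : ℕ) (hks : k'+1 ≤ s) :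
    ((r:ℚ)+1-(((k'+1:ℕ)):ℚ)) • sl2P h ((s:ℤ)+(r:ℤ)-2*(((k'+1:ℕ)):ℤ)+2) (k'+1)
      + (((k'+1:ℕ)):ℚ) • ((h - ((((s-k':ℕ):ℤ) - 1 : ℤ) : A)) * sl2P h ((s:ℤ)+(r:ℤ)-2*((k':ℕ):ℤ)) k')
    = ((r:ℚ)+1) • sl2P h ((s:ℤ)+((r+1:ℕ):ℤ)-2*(((k'+1:ℕ)):ℤ)) (k'+1) := by
  have h1 : (s:ℤ)+(r:ℤ)-2*(((k'+1:ℕ)):ℤ)+2 = (s:ℤ)+(r:ℤ)+1-2*((k':ℤ)+1)+1 := by push_cast; ring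
  have h2 : (s:ℤ)+(r:ℤ)-2*((k':ℕ):ℤ) = (s:ℤ)+(r:ℤ)+1-2*((k':ℤ)+1)+1 := by push_cast; ring
  have h3 : (s:ℤ)+((r+1:ℕ):ℤ)-2*(((k'+1:ℕ)):ℤ) = (s:ℤ)+(r:ℤ)+1-2*((k':ℤ)+1) := by push_cast; ring
  have h4 : ((s-k':ℕ):ℤ) - 1 = (s:ℤ) - ((k':ℤ)+1) := by
    rw [Nat.cast_sub (by omega : k' ≤ s)]; ring
  have h5 : (((k'+1:ℕ)):ℚ) = (k':ℚ)+1 := by push_cast; ring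
  rw [sl2P_congr h h1, sl2P_congr h h2, sl2P_congr h h3, h4, h5]
  exact hIden h k' (r:ℤ) (s:ℤ)

lemma natfacprod_ne (a b c : ℕ) : ((a.factorial * b.factorial * c.factorial : ℕ) : ℚ) ≠ 0 := by
  have : 0 < a.factorial * b.factorial * c.factorial :=
    Nat.mul_pos (Nat.mul_pos a.factorial_pos b.factorial_pos) c.factorial_pos
  exact_mod_cast this.ne'

lemma invfact_eq2 (X Y w1 w2 : ℕ) (hX : ((X:ℕ):ℚ) ≠ 0) (hY : ((Y:ℕ):ℚ) ≠ 0)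
    (hw : w1 * Y = w2 * X) :
    ((X:ℕ):ℚ)⁻¹ * ((w1:ℕ):ℚ) = ((Y:ℕ):ℚ)⁻¹ * ((w2:ℕ):ℚ) := by
  rw [inv_mul_eq_div, inv_mul_eq_div, div_eq_div_iff hX hY]
  exact_mod_cast hw

lemma combine0 (r s : ℕ) : ((r:ℚ)+1)⁻¹ • TmA e f h r s 0 = Tm e f h (r+1) s 0 := by
  unfold Tm TmA
  simp only [Nat.sub_zero, smul_smul, sl2P_zero]
  congr 1
  rw [Nat.factorial_succ]
  have hne : (r:ℚ)+1 ≠ 0 := by positivity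
  push_cast
  field_simp

lemma combineI (r s k' : ℕ) (hkr : k'+1 ≤ r) (hks : k'+1 ≤ s) :
    ((r:ℚ)+1)⁻¹ • (TmA e f h r s (k'+1) + TmB e f h r s k') = Tm e f h (r+1) s (k'+1) := by
  unfold Tm TmA TmB
  have hE1 : r - k' = r - (k'+1) + 1 := by omega
  have hE2 : s - k' - 1 = s - (k'+1) := by omega
  have hE3 : r + 1 - (k'+1) = r - (k'+1) + 1 := by omega
  rw [hE1, hE2, hE3]
  have HI := hIden' h r s k' hks
  have HS := congrArg (fun x : A => f ^ (s-(k'+1)) * x * e ^ (r-(k'+1)+1)) HI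
  simp only [mul_add, add_mul, mul_smul_comm, smul_mul_assoc] at HS
  rw [smul_add, smul_smul, smul_smul]
  have hrk : ((r:ℚ)+1)⁻¹ * (((s-(k'+1)).factorial * (k'+1).factorial * (r-(k'+1)).factorial : ℕ) : ℚ)⁻¹
      = (((r:ℚ)+1)⁻¹ * (((s-(k'+1)).factorial * (k'+1).factorial * (r-(k'+1)+1).factorial : ℕ) : ℚ)⁻¹)
        * ((r:ℚ)+1-((k'+1:ℕ):ℚ)) := by
    have hw : ((r:ℚ)+1-((k'+1:ℕ):ℚ)) = ((r-(k'+1)+1 : ℕ):ℚ) := by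
      push_cast [Nat.cast_sub hkr]; ring
    have key : (((s-(k'+1)).factorial * (k'+1).factorial * (r-(k'+1)).factorial : ℕ) : ℚ)⁻¹ * ((1:ℕ):ℚ)
        = (((s-(k'+1)).factorial * (k'+1).factorial * (r-(k'+1)+1).factorial : ℕ) : ℚ)⁻¹ * ((r-(k'+1)+1 : ℕ):ℚ) := by
      apply invfact_eq2 _ _ _ _ (natfacprod_ne _ _ _) (natfacprod_ne _ _ _)
      rw [Nat.factorial_succ (r-(k'+1))]
      ring
    rw [hw, mul_assoc ((r:ℚ)+1)⁻¹, ← key]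
    push_cast
    ring
  have hsk2 : ((r:ℚ)+1)⁻¹ * ((((s-k').factorial * k'.factorial * (r-(k'+1)+1).factorial : ℕ) : ℚ)⁻¹ * ((s-k' : ℕ):ℚ))
      = (((r:ℚ)+1)⁻¹ * (((s-(k'+1)).factorial * (k'+1).factorial * (r-(k'+1)+1).factorial : ℕ) : ℚ)⁻¹)
        * ((k'+1:ℕ):ℚ) := by
    have key : (((s-k').factorial * k'.factorial * (r-(k'+1)+1).factorial : ℕ) : ℚ)⁻¹ * ((s-k' : ℕ):ℚ)
        = (((s-(k'+1)).factorial * (k'+1).factorial * (r-(k'+1)+1).factorial : ℕ) : ℚ)⁻¹ * ((k'+1:ℕ):ℚ) := by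
      apply invfact_eq2 _ _ _ _ (natfacprod_ne _ _ _) (natfacprod_ne _ _ _)
      have hsk : s - k' = (s-(k'+1)) + 1 := by omega
      rw [hsk, Nat.factorial_succ (s-(k'+1)), Nat.factorial_succ k']
      ring
    rw [key]
    ring
  rw [hrk, hsk2,
    mul_smul (((r:ℚ)+1)⁻¹ * (((s-(k'+1)).factorial * (k'+1).factorial * (r-(k'+1)+1).factorial : ℕ) : ℚ)⁻¹),
    mul_smul (((r:ℚ)+1)⁻¹ * (((s-(k'+1)).factorial * (k'+1).factorial * (r-(k'+1)+1).factorial : ℕ) : ℚ)⁻¹),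
    ← smul_add, HS, smul_smul]
  congr 1
  have hne : (r:ℚ)+1 ≠ 0 := by positivity
  field_simp

lemma combineTop (r s : ℕ) (hrs : r < s) :
    ((r:ℚ)+1)⁻¹ • TmB e f h r s r = Tm e f h (r+1) s (r+1) := by
  unfold Tm TmB
  have hE1 : r - r = 0 := by omega
  have hE2 : r + 1 - (r+1) = 0 := by omega
  have hE3 : s - (r+1) = s - r - 1 := by omega
  rw [hE1, hE2, hE3]
  have hp : sl2P h ((s:ℤ)+((r+1:ℕ):ℤ)-2*(((r+1:ℕ)):ℤ)) (r+1)
      = (h - ((((s-r:ℕ):ℤ) - 1 : ℤ) : A)) * sl2P h ((s:ℤ)+(r:ℤ)-2*((r:ℕ):ℤ)) r := by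
    have g1 : (s:ℤ)+((r+1:ℕ):ℤ)-2*(((r+1:ℕ)):ℤ) = ((s-r:ℕ):ℤ) - 1 := by
      rw [Nat.cast_sub (by omega : r ≤ s)]; push_cast; ring
    have g2 : (((s-r:ℕ):ℤ) - 1) + 1 = (s:ℤ)+(r:ℤ)-2*((r:ℕ):ℤ) := by
      rw [Nat.cast_sub (by omega : r ≤ s)]; push_cast; ring
    rw [sl2P_congr h g1, sl2P_succ' h _ r, sl2P_congr h g2]
  rw [hp, smul_smul]
  congr 1
  have key : (((s-r).factorial * r.factorial * Nat.factorial 0 : ℕ) : ℚ)⁻¹ * ((s-r : ℕ):ℚ)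
      = (((s-r-1).factorial * (r+1).factorial * Nat.factorial 0 : ℕ) : ℚ)⁻¹ * ((r+1 : ℕ):ℚ) := by
    apply invfact_eq2 _ _ _ _ (natfacprod_ne _ _ _) (natfacprod_ne _ _ _)
    obtain ⟨t, ht⟩ : ∃ t, s - r - 1 = t := ⟨s-r-1, rfl⟩
    have hsr : s - r = t + 1 := by omega
    rw [ht, hsr, Nat.factorial_succ t, Nat.factorial_succ r]
    ring
  rw [key]
  have hne : ((r:ℚ)+1) ≠ 0 := by positivity
  push_cast
  field_simp
lemma key' (rel1 : h * e - e * h = 2 * e) (rel2 : h * f - f * h = -2 * f)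
    (rel3 : e * f - f * e = h) (r s : ℕ) :
    ((r.factorial * s.factorial : ℕ) : ℚ)⁻¹ • (e ^ r * f ^ s)
      = ∑ k ∈ Finset.range (min r s + 1), Tm e f h r s k := by
  induction r with
  | zero =>
    simp [Tm, sl2P]
  | succ r ih =>
    have expand : (((r+1).factorial * s.factorial : ℕ) : ℚ)⁻¹ • (e^(r+1) * f^s)
        = ((r:ℚ)+1)⁻¹ • (e * (((r.factorial * s.factorial : ℕ) : ℚ)⁻¹ • (e^r * f^s))) := by
      rw [mul_smul_comm, smul_smul, pow_succ', mul_assoc]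
      congr 1
      have hfa : ((r+1).factorial * s.factorial : ℕ) = (r+1) * (r.factorial * s.factorial) := by
        rw [Nat.factorial_succ]; ring
      rw [hfa]
      push_cast
      rw [mul_inv]
    rw [expand, ih, Finset.mul_sum]
    simp only [e_Tm rel1 rel2 rel3]
    rw [Finset.sum_add_distrib]
    rcases le_or_gt s r with hsr | hrs
    · rw [min_eq_right hsr, min_eq_right (by omega : s ≤ r+1)]
      rw [Finset.sum_range_succ' (fun k => TmA e f h r s k) s,
        Finset.sum_range_succ (fun k => TmB e f h r s k) s]
      have hBs : TmB e f h r s s = 0 := by simp [TmB]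
      rw [hBs, add_zero]
      rw [Finset.sum_range_succ' (fun k => Tm e f h (r+1) s k) s]
      rw [add_right_comm, ← Finset.sum_add_distrib, smul_add, Finset.smul_sum]
      congr 1
      · refine Finset.sum_congr rfl fun k hk => ?_
        rw [Finset.mem_range] at hk
        exact combineI r s k (by omega) (by omega)
      · exact combine0 r s
    · rw [min_eq_left (by omega : r ≤ s), min_eq_left (by omega : r+1 ≤ s)]
      rw [Finset.sum_range_succ' (fun k => TmA e f h r s k) r,
        Finset.sum_range_succ (fun k => TmB e f h r s k) r]
      rw [Finset.sum_range_succ (fun k => Tm e f h (r+1) s k) (r+1),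
        Finset.sum_range_succ' (fun k => Tm e f h (r+1) s k) r]
      rw [add_add_add_comm, ← Finset.sum_add_distrib, smul_add, smul_add, Finset.smul_sum]
      rw [add_assoc]
      congr 1
      · refine Finset.sum_congr rfl fun k hk => ?_
        rw [Finset.mem_range] at hk
        exact combineI r s k (by omega) (by omega)
      · rw [combine0 r s, combineTop r s hrs, add_comm]

theorem stmt7' (r s : ℕ)
    (rel1 : h * e - e * h = 2 * e)
    (rel2 : h * f - f * h = -2 * f)
    (rel3 : e * f - f * e = h) :
    ((r.factorial : ℚ))⁻¹ • e ^ r * ((s.factorial : ℚ))⁻¹ • f ^ s =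
      ∑ k ∈ Finset.range (min r s + 1),
        (((s - k).factorial : ℚ))⁻¹ • f ^ (s - k) *
          (((k.factorial : ℚ))⁻¹ •
            (((List.range k).map (fun m : ℕ => h - ((s + r - 2 * k + m : ℕ) : A))).prod)) *
          (((r - k).factorial : ℚ))⁻¹ • e ^ (r - k) := by
  have hL : ((r.factorial : ℚ))⁻¹ • e ^ r * ((s.factorial : ℚ))⁻¹ • f ^ s
      = ((r.factorial * s.factorial : ℕ) : ℚ)⁻¹ • (e ^ r * f ^ s) := by
    rw [smul_mul_assoc, mul_smul_comm, smul_smul]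
    congr 1
    push_cast
    rw [mul_inv]
  rw [hL, key' rel1 rel2 rel3 r s]
  refine Finset.sum_congr rfl fun k hk => ?_
  rw [Finset.mem_range] at hk
  have h2k : 2*k ≤ s + r := by
    have h1 := Nat.min_le_left r s
    have h2 := Nat.min_le_right r s
    omega
  have hList : ((List.range k).map (fun m : ℕ => h - ((s + r - 2 * k + m : ℕ) : A))).prod
      = sl2P h ((s:ℤ)+(r:ℤ)-2*(k:ℤ)) k := by
    unfold sl2P
    congr 1
    apply List.map_congr_left
    intro m _
    congr 1
    have hz : ((s + r - 2*k + m : ℕ) : ℤ) = (s:ℤ)+(r:ℤ)-2*(k:ℤ)+(m:ℕ) := by omega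
    rw [← Int.cast_natCast (R := A), hz]
  rw [hList]
  unfold Tm
  simp only [smul_mul_assoc, mul_smul_comm, smul_smul]
  congr 1
  push_cast
  rw [mul_inv, mul_inv]
  ring
end

/-- In a ℚ-algebra with sl₂-triple `(e, f, h)`, for all `r, s : ℕ`:
`(e^r/r!)·(f^s/s!) = ∑_{k=0}^{min r s} (f^{s−k}/(s−k)!) · binom(h−s−r+2k, k) · (e^{r−k}/(r−k)!)`,
where `binom(h−s−r+2k, k) = (k!)⁻¹ · ∏_{m=0}^{k−1} (h − (s+r−2k+m)·1)`. -/
theorem stmt7 (A : Type*) [Ring A] [Algebra ℚ A]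
    (e f h : A)
    (rel1 : h * e - e * h = 2 * e)
    (rel2 : h * f - f * h = -2 * f)
    (rel3 : e * f - f * e = h)
    (r s : ℕ) :
    ((r.factorial : ℚ))⁻¹ • e ^ r * ((s.factorial : ℚ))⁻¹ • f ^ s =
      ∑ k ∈ Finset.range (min r s + 1),
        (((s - k).factorial : ℚ))⁻¹ • f ^ (s - k) *
          (((k.factorial : ℚ))⁻¹ •
            (((List.range k).map (fun m : ℕ => h - ((s + r - 2 * k + m : ℕ) : A))).prod)) *
          (((r - k).factorial : ℚ))⁻¹ • e ^ (r - k) := by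
  exact stmt7' r s rel1 rel2 rel3
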